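/- In the tree-metric Vertex Cover reduction, the minimum size of a set O ⊆ X such that (X \ O, d) is a tree metric equals the minimum size of a vertex cover of G = (V, E). -/

import Mathlib

private lemma minpair (a b c d : ℝ) :
    min (min a c + min b d) (min a d + min b c) ≤ min a b + min c d := by
  simp only [min_def]
  split_ifs <;> linarith

set_option linter.unreachableTactic false in
set_option linter.unusedTactic false in
private lemma gromov {ι : Type*} [DecidableEq ι] (A B C D : Option ι) (a b c d : ℝ)
    (ha : 0 ≤ a) (hb : 0 ≤ b) (hc : 0 ≤ c) (hd : 0 ≤ d) :
    min ((if A = C then min a c else 0) + (if B = D then min b d else 0))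
        ((if A = D then min a d else 0) + (if B = C then min b c else 0))
    ≤ (if A = B then min a b else 0) + (if C = D then min c d else 0) := by
  split_ifs <;>
  first
    | exact minpair a b c d
    | exact min_le_iff.mp (minpair a b c d)
    | exact add_nonneg (le_min ha hb) (le_min hc hd)
    | (simp_all; exact add_nonneg (le_min ha hb) (le_min hc hd))
    | simp_all
    | (refine min_le_iff.mpr (Or.inl ?_);
        linarith [min_le_left a c, min_le_right a c, min_le_left b d, min_le_right b d,
          min_le_left a b, min_le_right a b, min_le_left c d, min_le_right c d])
    | (refine min_le_iff.mpr (Or.inr ?_);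
        linarith [min_le_left a d, min_le_right a d, min_le_left b c, min_le_right b c,
          min_le_left a b, min_le_right a b, min_le_left c d, min_le_right c d])

/-- In the tree-metric Vertex Cover reduction, the minimum outlier size (for obtaining
a tree metric, i.e. the four-point condition) equals the minimum vertex cover size. -/
theorem stmt12 {n : ℕ} (G : SimpleGraph (Fin n)) (ν : ℝ) (hν : 0 < ν) (hν1 : ν < 1)
    (d : (Unit ⊕ Fin n ⊕ Fin n) → (Unit ⊕ Fin n ⊕ Fin n) → ℝ)
    (hsymm : ∀ p q, d p q = d q p)
    (hdiag : ∀ p, d p p = 0)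
    (hxy_same : ∀ i, d (.inr (.inl i)) (.inr (.inr i)) = 1)
    (hox : ∀ i, d (.inl ()) (.inr (.inl i)) = 2)
    (hoy : ∀ i, d (.inl ()) (.inr (.inr i)) = 1)
    (hyy : ∀ i j, i ≠ j → d (.inr (.inr i)) (.inr (.inr j)) = 2)
    (hxy : ∀ i j, i ≠ j → d (.inr (.inl i)) (.inr (.inr j)) = 3)
    (hxx_adj : ∀ i j, G.Adj i j → d (.inr (.inl i)) (.inr (.inl j)) = 4 - ν)
    (hxx : ∀ i j, i ≠ j → ¬ G.Adj i j → d (.inr (.inl i)) (.inr (.inl j)) = 4) :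
    sInf {k : ℕ | ∃ O : Finset (Unit ⊕ Fin n ⊕ Fin n), O.card = k ∧
        ∀ p ∉ O, ∀ q ∉ O, ∀ r ∉ O, ∀ s ∉ O,
          d p q + d r s ≤ max (d p r + d q s) (d p s + d q r)} =
      sInf {k : ℕ | ∃ C : Finset (Fin n), C.card = k ∧
        ∀ i j, G.Adj i j → i ∈ C ∨ j ∈ C} := by
  apply le_antisymm
  · -- outlier optimum ≤ vertex cover optimum
    have hne : {k : ℕ | ∃ C : Finset (Fin n), C.card = k ∧
        ∀ i j, G.Adj i j → i ∈ C ∨ j ∈ C}.Nonempty :=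
      ⟨n, Finset.univ, by simp, fun i j _ => Or.inl (Finset.mem_univ i)⟩
    obtain ⟨C, hCcard, hCcover⟩ := Nat.sInf_mem hne
    apply Nat.sInf_le
    refine ⟨C.image (fun i => Sum.inr (Sum.inl i)), ?_, ?_⟩
    · rw [Finset.card_image_of_injective _ (fun a b h => by simpa using h)]
      exact hCcard
    · -- the remaining points form a (star) tree metric
      set O : Finset (Unit ⊕ Fin n ⊕ Fin n) := C.image (fun i => Sum.inr (Sum.inl i)) with hO
      -- branch and height functions
      set B : (Unit ⊕ Fin n ⊕ Fin n) → Option (Fin n) :=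
        Sum.elim (fun _ => none) (Sum.elim (fun i => some i) (fun i => some i)) with hB
      set H : (Unit ⊕ Fin n ⊕ Fin n) → ℝ :=
        Sum.elim (fun _ => 0) (Sum.elim (fun _ => 2) (fun _ => 1)) with hH
      have hHnn : ∀ p, 0 ≤ H p := by
        rintro (_ | i | i) <;> simp [hH] <;> norm_num
      have hform : ∀ p ∉ O, ∀ q ∉ O,
          d p q = H p + H q - 2 * (if B p = B q then min (H p) (H q) else 0) := by
        rintro p hp q hq
        have hmem : ∀ i : Fin n, (Sum.inr (Sum.inl i) : Unit ⊕ Fin n ⊕ Fin n) ∈ O ↔ i ∈ C := by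
          intro i; simp [hO]
        rcases p with _ | i | i <;> rcases q with _ | j | j
        · simp [hB, hH, hdiag]
        · simp [hB, hH, hox]
        · simp [hB, hH, hoy]
        · rw [hsymm]; simp [hB, hH, hox]
        · by_cases hij : i = j
          · subst hij; simp [hB, hH, hdiag]; try ring
          · have hnadj : ¬ G.Adj i j := by
              intro hadj
              rcases hCcover i j hadj with h | h
              · exact hp ((hmem i).mpr h)
              · exact hq ((hmem j).mpr h)
            simp [hB, hH, hij, hxx i j hij hnadj]; norm_num
        · by_cases hij : i = j
          · subst hij; simp [hB, hH, hxy_same]; try ring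
          · simp [hB, hH, hij, hxy i j hij]; norm_num
        · rw [hsymm]; simp [hB, hH, hoy]
        · by_cases hij : i = j
          · subst hij; rw [hsymm]; simp [hB, hH, hxy_same]; try ring
          · rw [hsymm]; simp [hB, hH, hij, hxy j i (Ne.symm hij)]; norm_num
        · by_cases hij : i = j
          · subst hij; simp [hB, hH, hdiag]; try ring
          · simp [hB, hH, hij, hyy i j hij]; norm_num
      intro p hp q hq r hr s hs
      have key := gromov (B p) (B q) (B r) (B s) (H p) (H q) (H r) (H s)
        (hHnn p) (hHnn q) (hHnn r) (hHnn s)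
      rw [hform p hp q hq, hform r hr s hs, hform p hp r hr, hform q hq s hs,
        hform p hp s hs, hform q hq r hr]
      rcases min_le_iff.mp key with h | h
      · exact le_max_iff.mpr (Or.inl (by linarith))
      · exact le_max_iff.mpr (Or.inr (by linarith))
  · -- vertex cover optimum ≤ outlier optimum
    have hne : {k : ℕ | ∃ O : Finset (Unit ⊕ Fin n ⊕ Fin n), O.card = k ∧
        ∀ p ∉ O, ∀ q ∉ O, ∀ r ∉ O, ∀ s ∉ O,
          d p q + d r s ≤ max (d p r + d q s) (d p s + d q r)}.Nonempty :=
      ⟨Finset.univ.card, Finset.univ, rfl, fun p hp => absurd (Finset.mem_univ p) hp⟩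
    obtain ⟨O, hOcard, hO4⟩ := Nat.sInf_mem hne
    set C : Finset (Fin n) := Finset.univ.filter
      (fun i => (Sum.inr (Sum.inl i) : Unit ⊕ Fin n ⊕ Fin n) ∈ O ∨
        (Sum.inr (Sum.inr i) : Unit ⊕ Fin n ⊕ Fin n) ∈ O) with hC
    have hcov : ∀ i j, G.Adj i j → i ∈ C ∨ j ∈ C := by
      intro i j hadj
      by_contra hcon
      push_neg at hcon
      obtain ⟨hi, hj⟩ := hcon
      simp only [hC, Finset.mem_filter, Finset.mem_univ, true_and, not_or] at hi hj
      have hij : i ≠ j := hadj.ne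
      have h4 := hO4 (Sum.inr (Sum.inl i)) hi.1 (Sum.inr (Sum.inr j)) hj.2
        (Sum.inr (Sum.inl j)) hj.1 (Sum.inr (Sum.inr i)) hi.2
      rw [hxy i j hij, hxy j i hij.symm, hxx_adj i j hadj, hyy j i hij.symm,
        hxy_same i, hsymm (Sum.inr (Sum.inr j)) (Sum.inr (Sum.inl j)), hxy_same j] at h4
      rcases le_max_iff.mp h4 with h | h <;> linarith
    have hcard : C.card ≤ O.card := by
      apply Finset.card_le_card_of_injOn
        (fun i => if (Sum.inr (Sum.inl i) : Unit ⊕ Fin n ⊕ Fin n) ∈ O then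
          Sum.inr (Sum.inl i) else Sum.inr (Sum.inr i))
      · intro i hi
        simp only [hC, Finset.mem_coe, Finset.mem_filter, Finset.mem_univ, true_and] at hi ⊢
        split_ifs with h
        · exact h
        · exact hi.resolve_left h
      · intro i _ j _ hEq
        simp only at hEq
        split_ifs at hEq <;>
          simp only [Sum.inr.injEq, Sum.inl.injEq, reduceCtorEq] at hEq <;> try exact hEq
    calc sInf {k : ℕ | ∃ C : Finset (Fin n), C.card = k ∧
          ∀ i j, G.Adj i j → i ∈ C ∨ j ∈ C} ≤ C.card := Nat.sInf_le ⟨C, rfl, hcov⟩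
      _ ≤ O.card := hcard
      _ = _ := hOcard
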